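/- For every J > 0, γ ≥ 0, every L a positive multiple of 4, every θ*, φ* ∈ (−π,π], and every site r ∈ T_L, the partial derivative of H_L with respect to the variable θ_r, evaluated at the configuration whose deviation variables vanish identically (ϑ ≡ 0), is equal to zero; i.e., the Taylor expansion of the torus Hamiltonian about any such ground state has no linear terms in the deviation variables. -/

import Mathlib

open MeasureTheory Real Filter

noncomputable section
open scoped Classical

/-- The torus `T_L = (ℤ/L)²`. -/
abbrev Torus (L : ℕ) := ZMod L × ZMod L

/-- The torus Hamiltonian `H_L` of the nnn antiferromagnet, in angle variables. -/
def torusH (L : ℕ) (hL : L ≠ 0) (J γ : ℝ) (θ : Torus L → ℝ) : ℝ :=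
  haveI : NeZero L := ⟨hL⟩
  J * ∑ r : Torus L,
      (2 + Real.cos (θ r - θ (r + (1, 1))) + Real.cos (θ r - θ (r + (1, -1))))
    + J * γ * ∑ r : Torus L,
        (Real.cos (θ r - θ (r + (1, 0))) + Real.cos (θ r - θ (r + (0, 1))))

/-- The ground-state offset determined by the overall angle `θ*` and the relative
angle `φ*` between the Néel states of the even and the odd sublattice. -/
def offset (L : ℕ) (θs φs : ℝ) (r : Torus L) : ℝ :=
  if Even r.1.val then (if Even r.2.val then θs else θs + φs + π)
  else (if Even r.2.val then θs + φs else θs + π)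

/-- The harmonic (spin-wave) Hamiltonian `I_{L,φ*}` acting on deviation variables. -/
def harmH (L : ℕ) (hL : L ≠ 0) (β J γ φs : ℝ) (ϑ : Torus L → ℝ) : ℝ :=
  haveI : NeZero L := ⟨hL⟩
  β * J / 2 * ∑ r : Torus L,
      ((ϑ r - ϑ (r + (1, 1))) ^ 2 + (ϑ r - ϑ (r + (1, -1))) ^ 2)
    + β * J * γ / 2 * Real.cos φs * ∑ r : Torus L,
        ((ϑ r - ϑ (r + (1, 0))) ^ 2 + (ϑ r - ϑ (r + (0, 1))) ^ 2)

/-- The constrained Gaussian integral `Q_{L,Δ}(φ*)`. -/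
def Q (L : ℕ) (hL : L ≠ 0) (β J γ Δ φs : ℝ) : ℝ :=
  haveI : NeZero L := ⟨hL⟩
  ∫ ϑ : Torus L → ℝ,
    Real.exp (-harmH L hL β J γ φs ϑ) * (if ∀ r, |ϑ r| < Δ then (1 : ℝ) else 0)
      * (β * J / (2 * π)) ^ (((L : ℝ) ^ 2) / 2)

/-- The massive Gaussian partition function `Q_L(φ*,λ)`. -/
def Qmass (L : ℕ) (hL : L ≠ 0) (β J γ φs lam : ℝ) : ℝ :=
  haveI : NeZero L := ⟨hL⟩
  ∫ ϑ : Torus L → ℝ,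
    Real.exp (-harmH L hL β J γ φs ϑ - β * J * lam / 2 * ∑ r : Torus L, (ϑ r) ^ 2)
      * (β * J / (2 * π)) ^ (((L : ℝ) ^ 2) / 2)

/-- The finite-volume constrained free energy `F_{L,Δ}(φ*)` (with reference angle `θ*`),
defined via integration of the angles over the unit circle, parametrized by `(-π,π]`
(`dθ_r` = Lebesgue measure on the unit circle), written in deviation variables. -/
def FL (L : ℕ) (hL : L ≠ 0) (J γ β Δ θs φs : ℝ) : ℝ :=
  haveI : NeZero L := ⟨hL⟩
  (-(1 / (L : ℝ) ^ 2)) * Real.log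
    (∫ ϑ in Set.univ.pi (fun _ : Torus L => Set.Ioc (-π) π),
      Real.exp (-(β * torusH L hL J γ (fun r => ϑ r + offset L θs φs r)))
        * (if ∀ r, |ϑ r| < Δ then (1 : ℝ) else 0)
        * (β * J / (2 * π)) ^ (((L : ℝ) ^ 2) / 2))

/-- The massive Gaussian probability measure `P_λ` on `ℝ^{T_L}`. -/
def gaussP (L : ℕ) (hL : L ≠ 0) (β J γ φs lam : ℝ) : Measure (Torus L → ℝ) :=
  haveI : NeZero L := ⟨hL⟩
  letI μ : Measure (Torus L → ℝ) := volume.withDensity fun ϑ =>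
    ENNReal.ofReal (Real.exp (-harmH L hL β J γ φs ϑ - β * J * lam / 2 * ∑ r : Torus L, (ϑ r) ^ 2))
  (μ Set.univ)⁻¹ • μ


private lemma even_val_add_one {L : ℕ} [NeZero L] (hL2 : 2 ∣ L) (h1 : 1 < L) (x : ZMod L) :
    Even ((x + 1).val) ↔ ¬ Even x.val := by
  haveI : Fact (1 < L) := ⟨h1⟩
  rw [ZMod.val_add, ZMod.val_one, Nat.even_iff, Nat.mod_mod_of_dvd _ hL2, ← Nat.even_iff,
    Nat.even_add_one]

private lemma even_val_sub_one {L : ℕ} [NeZero L] (hL2 : 2 ∣ L) (h1 : 1 < L) (x : ZMod L) :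
    Even ((x - 1).val) ↔ ¬ Even x.val := by
  have h := even_val_add_one hL2 h1 (x - 1)
  rw [sub_add_cancel] at h
  tauto

set_option maxHeartbeats 1000000 in
/-- the Taylor expansion of `H_L` about any ground state (vanishing
deviation variables) has no linear terms: the partial derivative of `H_L` in each
single spin variable `θ_r`, evaluated at the ground state, vanishes. -/
theorem no_linear_terms (J γ : ℝ) (hJ : 0 < J) (hγ : 0 ≤ γ)
    (L : ℕ) (hL : L ≠ 0) (hL4 : ∃ m : ℕ, 0 < m ∧ L = 4 * m)
    (θs φs : ℝ) (hθs : θs ∈ Set.Ioc (-π) π) (hφs : φs ∈ Set.Ioc (-π) π)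
    (r : Torus L) :
    HasDerivAt
      (fun t : ℝ =>
        torusH L hL J γ (Function.update (fun r' => offset L θs φs r') r t))
      0 (offset L θs φs r) := by
  classical
  haveI : NeZero L := ⟨hL⟩
  obtain ⟨m, hm, hLm⟩ := hL4
  have h1L : 1 < L := by omega
  have hL2 : 2 ∣ L := ⟨2 * m, by omega⟩
  set f : Torus L → ℝ := fun r' => offset L θs φs r' with hf
  set t₀ : ℝ := f r with ht₀
  -- derivative of each coordinate
  have key : ∀ a : Torus L, HasDerivAt (fun t => Function.update f r t a)
      (if a = r then (1:ℝ) else 0) t₀ := by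
    intro a
    by_cases h : a = r
    · subst h
      simp only [if_pos rfl]
      simpa [Function.update_apply] using (hasDerivAt_id' t₀)
    · simp only [if_neg h]
      simpa [Function.update_apply, h] using (hasDerivAt_const t₀ (f a))
  have hupd : Function.update f r t₀ = f := Function.update_eq_self r f
  have hcos : ∀ a b : Torus L, HasDerivAt
      (fun t => Real.cos (Function.update f r t a - Function.update f r t b))
      (-Real.sin (f a - f b) * ((if a = r then (1:ℝ) else 0) - (if b = r then (1:ℝ) else 0)))
      t₀ := by
    intro a b
    have h := ((key a).sub (key b)).cos
    simpa [hupd] using h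
  set e : Torus L → ℝ := fun a => if a = r then (1:ℝ) else 0 with he
  set d : Torus L → Torus L → ℝ := fun a b => -Real.sin (f a - f b) * (e a - e b) with hd
  have hmain : HasDerivAt
      (fun t : ℝ => torusH L hL J γ (Function.update f r t))
      (J * (∑ a : Torus L, ((0:ℝ) + d a (a + (1,1)) + d a (a + (1,-1))))
        + J * γ * (∑ a : Torus L, (d a (a + (1,0)) + d a (a + (0,1))))) t₀ := by
    have h1 : HasDerivAt (fun t : ℝ => ∑ a : Torus L,
        ((2:ℝ) + Real.cos (Function.update f r t a - Function.update f r t (a + (1,1)))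
          + Real.cos (Function.update f r t a - Function.update f r t (a + (1,-1)))))
        (∑ a : Torus L, ((0:ℝ) + d a (a + (1,1)) + d a (a + (1,-1)))) t₀ :=
      HasDerivAt.fun_sum fun a _ =>
        ((hasDerivAt_const t₀ (2:ℝ)).add (hcos a (a + (1,1)))).add (hcos a (a + (1,-1)))
    have h2 : HasDerivAt (fun t : ℝ => ∑ a : Torus L,
        (Real.cos (Function.update f r t a - Function.update f r t (a + (1,0)))
          + Real.cos (Function.update f r t a - Function.update f r t (a + (0,1)))))
        (∑ a : Torus L, (d a (a + (1,0)) + d a (a + (0,1)))) t₀ :=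
      HasDerivAt.fun_sum fun a _ => (hcos a (a + (1,0))).add (hcos a (a + (0,1)))
    simp only [torusH]
    exact (h1.const_mul J).add (h2.const_mul (J * γ))
  have hsum : ∀ s : Torus L, (∑ a : Torus L, d a (a + s))
      = -Real.sin (f r - f (r + s)) + Real.sin (f (r - s) - f r) := by
    intro s
    have hc : ∀ a : Torus L, (a + s = r) = (a = r - s) := fun a =>
      (propext eq_sub_iff_add_eq).symm
    simp only [hd, he, hc, mul_sub, Finset.sum_sub_distrib, mul_ite, mul_one, mul_zero,
      Finset.sum_ite_eq', Finset.mem_univ, if_true, sub_add_cancel]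
    ring
  have hzero : (J * (∑ a : Torus L, ((0:ℝ) + d a (a + (1,1)) + d a (a + (1,-1))))
      + J * γ * (∑ a : Torus L, (d a (a + (1,0)) + d a (a + (0,1))))) = 0 := by
    simp only [Finset.sum_add_distrib, hsum, zero_add]
    have hval : ∀ p : Torus L, f p = if Even p.1.val then
        (if Even p.2.val then θs else θs + φs + π)
        else (if Even p.2.val then θs + φs else θs + π) := fun p => rfl
    have hx1 : ∀ x : ZMod L, Even ((x + 1).val) ↔ ¬ Even x.val :=
      even_val_add_one hL2 h1L
    have hx2 : ∀ x : ZMod L, Even ((x - 1).val) ↔ ¬ Even x.val :=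
      even_val_sub_one hL2 h1L
    have hx3 : ∀ x : ZMod L, Even ((x + (-1)).val) ↔ ¬ Even x.val := by
      intro x; rw [← sub_eq_add_neg]; exact hx2 x
    have hx4 : ∀ x : ZMod L, Even ((x - (-1)).val) ↔ ¬ Even x.val := by
      intro x; rw [sub_neg_eq_add]; exact hx1 x
    have s1 : θs - (θs + π) = -π := by ring
    have s2 : (θs + π) - θs = π := by ring
    have s3 : (θs + φs) - (θs + φs + π) = -π := by ring
    have s4 : (θs + φs + π) - (θs + φs) = π := by ring
    have s5 : θs - (θs + φs) = -φs := by ring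
    have s6 : (θs + φs) - θs = φs := by ring
    have s7 : θs - (θs + φs + π) = -(φs + π) := by ring
    have s8 : (θs + φs + π) - θs = φs + π := by ring
    have s9 : (θs + π) - (θs + φs + π) = -φs := by ring
    have s10 : (θs + φs + π) - (θs + π) = φs := by ring
    have s11 : (θs + π) - (θs + φs) = π - φs := by ring
    have s12 : (θs + φs) - (θs + π) = -(π - φs) := by ring
    by_cases hpx : Even r.1.val <;> by_cases hpy : Even r.2.val <;>
      simp only [hval, Prod.fst_add, Prod.snd_add, Prod.fst_sub, Prod.snd_sub,
        add_zero, sub_zero, hx1, hx2, hx3, hx4, hpx, hpy, not_true, not_false_iff,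
        if_true, if_false, ite_true, ite_false, not_not,
        s1, s2, s3, s4, s5, s6, s7, s8, s9, s10, s11, s12,
        Real.sin_neg, Real.sin_pi, Real.sin_add_pi, Real.sin_pi_sub] <;>
      ring
  rw [← hzero]
  exact hmain


end
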